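/- arXiv:2109.06348 — 2 statements merged into one kernel-verified Lean document; each statement's English description precedes it below -/
import Mathlib

section
/- For a mean-zero (demeaned exponential) frailty ν with density θ e^{-θ(ν + 1/θ)} on ν ≥ -1/θ, the marginalized cumulative incidence E_ν[F₁(t; X, ν)] satisfies: its subdistribution hazard retains the additive structure in the covariate term, i.e., -d/dt log{1 - E_ν F₁(t; X, ν)} = λ̃₀(t) + Xᵀβ₁ e^{-t} for some function λ̃₀ not depending on X. -/
open MeasureTheory Real Matrix

/-- Marginalizing the frailty-conditional CIF over a mean-zero frailty
preserves the additive structure of the subdistribution hazard: the hazard of the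
marginalized CIF equals a baseline term `λ̃₀(t)` (not depending on `X`) plus
`Xᵀβ₁ e^{-t}`. -/
theorem marginalized_cif_additive_hazard
    (p : ℕ) (ρ : ℝ) (hρ : 0 < ρ) (hρ1 : ρ < 1)
    (β₁ : Fin p → ℝ)
    (Ω : Type*) [MeasurableSpace Ω] (μ : Measure Ω) [IsProbabilityMeasure μ]
    (ν : Ω → ℝ) (hνint : Integrable ν μ) (hνmean : ∫ ω, ν ω ∂μ = 0)
    (hνrange : ∀ᵐ ω ∂μ, 0 < ρ + ν ω ∧ ρ + ν ω < 1)
    (F₁ : ℝ → (Fin p → ℝ) → Ω → ℝ)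
    (hF₁ : ∀ t X ω, F₁ t X ω =
      1 - (1 - (ρ + ν ω) * (1 - Real.exp (-t))) *
        Real.exp (-(X ⬝ᵥ β₁) * (1 - Real.exp (-t)))) :
    ∃ lam0 : ℝ → ℝ, ∀ (X : Fin p → ℝ) (t : ℝ), 0 ≤ t →
      HasDerivAt (fun s => -Real.log (1 - ∫ ω, F₁ s X ω ∂μ))
        (lam0 t + (X ⬝ᵥ β₁) * Real.exp (-t)) t := by
  refine ⟨fun t => ρ * Real.exp (-t) / (1 - ρ * (1 - Real.exp (-t))), ?_⟩
  intro X t ht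
  set cX := X ⬝ᵥ β₁ with hcX
  have hpos : ∀ s : ℝ, 0 < 1 - ρ * (1 - Real.exp (-s)) := by
    intro s
    rcases le_or_gt s 0 with h | h
    · have h1 : (1:ℝ) ≤ Real.exp (-s) := Real.one_le_exp (by linarith)
      nlinarith
    · have h1 : (0:ℝ) < Real.exp (-s) := Real.exp_pos _
      have h2 : Real.exp (-s) < 1 := by
        rw [Real.exp_lt_one_iff]; linarith
      nlinarith
  have hint : ∀ s : ℝ, ∫ ω, F₁ s X ω ∂μ =
      1 - (1 - ρ * (1 - Real.exp (-s))) * Real.exp (-cX * (1 - Real.exp (-s))) := by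
    intro s
    have heq : (fun ω => F₁ s X ω) =
        fun ω => (1 - (1 - ρ * (1 - Real.exp (-s))) * Real.exp (-cX * (1 - Real.exp (-s))))
          + ((1 - Real.exp (-s)) * Real.exp (-cX * (1 - Real.exp (-s)))) * ν ω := by
      funext ω; rw [hF₁]; ring
    rw [heq, integral_add (integrable_const _) (hνint.const_mul _),
      MeasureTheory.integral_const_mul, hνmean]
    simp
  have hfun : (fun s => -Real.log (1 - ∫ ω, F₁ s X ω ∂μ)) =
      fun s => -Real.log (1 - ρ * (1 - Real.exp (-s))) + cX * (1 - Real.exp (-s)) := by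
    funext s
    rw [hint s]
    have h1 := hpos s
    have h2 : (0:ℝ) < Real.exp (-cX * (1 - Real.exp (-s))) := Real.exp_pos _
    rw [show (1 - (1 - (1 - ρ * (1 - Real.exp (-s))) * Real.exp (-cX * (1 - Real.exp (-s)))))
        = (1 - ρ * (1 - Real.exp (-s))) * Real.exp (-cX * (1 - Real.exp (-s))) from by ring,
      Real.log_mul (ne_of_gt h1) (ne_of_gt h2), Real.log_exp]
    ring
  rw [hfun]
  have he : HasDerivAt (fun s : ℝ => Real.exp (-s)) (-Real.exp (-t)) t := by
    simpa using (hasDerivAt_neg t).exp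
  have h1 : HasDerivAt (fun s : ℝ => 1 - Real.exp (-s)) (Real.exp (-t)) t := by
    simpa using he.const_sub 1
  have hu : HasDerivAt (fun s : ℝ => 1 - ρ * (1 - Real.exp (-s)))
      (-(ρ * Real.exp (-t))) t := by
    simpa using (h1.const_mul ρ).const_sub 1
  have hlog := (hu.log (ne_of_gt (hpos t))).neg
  have hsum := hlog.add (h1.const_mul cX)
  convert hsum using 1
  have := hpos t
  case e'_9 => beta_reduce; ring
  all_goals rfl
end

section
/- The IPCW weight ω(t) = r(t) G(t)/G(Z ∧ t) with r(t) = 1{C ≥ T ∧ t}, Z = T ∧ C, satisfies E[ω(t) · h(T, ε) · 1{T ≤ t}] = G(t) · E[h(T, ε) 1{T ≤ t}] for any bounded measurable h, when C is independent of (T, ε) with survival function G(t) = P(C ≥ t) > 0. -/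
open MeasureTheory ProbabilityTheory

/-- The IPCW weight `ω(t) = 1{C ≥ T∧t}·G(t)/G(Z∧t)` satisfies
`E[ω(t) h(T,ε) 1{T ≤ t}] = G(t)·E[h(T,ε) 1{T ≤ t}]` for bounded measurable `h`,
when `C ⫫ (T, ε)` and `G(u) = P(C ≥ u) > 0` on `[0,τ]`. -/
theorem ipcw_weight_unbiased
    (Ω : Type*) [MeasurableSpace Ω] (μ : Measure Ω) [IsProbabilityMeasure μ]
    (T C : Ω → ℝ) (eps : Ω → ℕ)
    (hT : Measurable T) (hC : Measurable C) (heps : Measurable eps)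
    (hTpos : ∀ ω, 0 < T ω)
    (hindep : IndepFun C (fun ω => (T ω, eps ω)) μ)
    (τ : ℝ) (hτ : 0 < τ)
    (G : ℝ → ℝ) (hG : ∀ u, G u = (μ {ω | u ≤ C ω}).toReal)
    (hGpos : ∀ u ∈ Set.Icc (0:ℝ) τ, 0 < G u)
    (h : ℝ → ℕ → ℝ) (hhmeas : Measurable (fun q : ℝ × ℕ => h q.1 q.2))
    (Cb : ℝ) (hhbdd : ∀ x k, |h x k| ≤ Cb)
    (t : ℝ) (ht0 : 0 ≤ t) (htτ : t ≤ τ)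
    (w : Ω → ℝ)
    (hw : ∀ ω, w ω = (if min (T ω) t ≤ C ω then (1:ℝ) else 0) *
      G t / G (min (min (T ω) (C ω)) t)) :
    ∫ ω, w ω * h (T ω) (eps ω) * (if T ω ≤ t then (1:ℝ) else 0) ∂μ =
      G t * ∫ ω, h (T ω) (eps ω) * (if T ω ≤ t then (1:ℝ) else 0) ∂μ := by
  classical
  set X : Ω → ℝ × ℕ := fun ω => (T ω, eps ω) with hXdef
  have hXm : Measurable X := hT.prodMk heps
  -- G is antitone, hence measurable
  have hGanti : Antitone G := by
    intro u v huv
    rw [hG, hG]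
    exact ENNReal.toReal_mono (measure_ne_top μ _)
      (measure_mono (fun ω hω => le_trans huv hω))
  have hGmeas : Measurable G := hGanti.measurable
  have hGt : 0 < G t := hGpos t ⟨ht0, htτ⟩
  have hCb : 0 ≤ Cb := le_trans (abs_nonneg _) (hhbdd 0 0)
  -- the reweighted function g
  set g : ℝ × ℕ → ℝ := fun p => h p.1 p.2 * (if p.1 ≤ t then (1:ℝ) else 0) / G p.1
    with hgdef
  have hgmeas : Measurable g := by
    apply Measurable.div
    · exact hhmeas.mul (Measurable.ite (measurableSet_le measurable_fst measurable_const)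
        measurable_const measurable_const)
    · exact hGmeas.comp measurable_fst
  have hgbdd : ∀ p, |g p| ≤ Cb / G t := by
    intro p
    by_cases hp : p.1 ≤ t
    · have hGp : G t ≤ G p.1 := hGanti hp
      have hGp0 : 0 < G p.1 := lt_of_lt_of_le hGt hGp
      simp only [hgdef, hp, if_pos, mul_one]
      rw [abs_div, abs_of_pos hGp0]
      exact div_le_div₀ (le_trans (abs_nonneg _) (hhbdd p.1 p.2)) (hhbdd p.1 p.2) hGt hGp
    · simp only [hgdef, hp, if_neg, not_false_iff, mul_zero, zero_div, abs_zero]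
      positivity
  -- the joint function
  set F : ℝ × (ℝ × ℕ) → ℝ := fun q => (if q.2.1 ≤ q.1 then (1:ℝ) else 0) * g q.2
    with hFdef
  have hFmeas : Measurable F := by
    apply Measurable.mul
    · exact Measurable.ite (measurableSet_le (measurable_fst.comp measurable_snd)
        measurable_fst) measurable_const measurable_const
    · exact hgmeas.comp measurable_snd
  have hFbdd : ∀ q, |F q| ≤ Cb / G t := by
    intro q
    rw [hFdef]
    by_cases hq : q.2.1 ≤ q.1
    · simpa [hq] using hgbdd q.2
    · simp [hq]
      positivity
  -- independence gives the product measure identity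
  have hmap : μ.map (fun ω => (C ω, X ω)) = (μ.map C).prod (μ.map X) :=
    (indepFun_iff_map_prod_eq_prod_map_map hC.aemeasurable hXm.aemeasurable).mp hindep
  haveI : IsProbabilityMeasure (μ.map C) := Measure.isProbabilityMeasure_map hC.aemeasurable
  haveI : IsProbabilityMeasure (μ.map X) := Measure.isProbabilityMeasure_map hXm.aemeasurable
  -- integrability of F over the product
  have hFint : Integrable F ((μ.map C).prod (μ.map X)) := by
    apply Integrable.mono' (integrable_const (Cb / G t)) hFmeas.aestronglyMeasurable
    exact Filter.Eventually.of_forall (fun q => by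
      rw [Real.norm_eq_abs]; exact hFbdd q)
  -- key identity from independence
  have hGmap : ∀ u : ℝ, ((μ.map C) (Set.Ici u)).toReal = G u := by
    intro u
    rw [Measure.map_apply hC measurableSet_Ici, hG]
    rfl
  have key : ∫ ω, (if T ω ≤ C ω then (1:ℝ) else 0) * g (X ω) ∂μ
      = ∫ ω, G (T ω) * g (X ω) ∂μ := by
    have h1 : ∫ ω, (if T ω ≤ C ω then (1:ℝ) else 0) * g (X ω) ∂μ
        = ∫ q, F q ∂(μ.map (fun ω => (C ω, X ω))) := by
      rw [integral_map (hC.prodMk hXm).aemeasurable hFmeas.aestronglyMeasurable]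
    rw [h1, hmap, integral_prod_symm F hFint]
    have h2 : ∀ p : ℝ × ℕ, ∫ c, F (c, p) ∂(μ.map C) = G p.1 * g p := by
      intro p
      have : (fun c => F (c, p)) = fun c => (Set.Ici p.1).indicator (1 : ℝ → ℝ) c * g p := by
        funext c
        by_cases hc : p.1 ≤ c <;> simp [hFdef, hc, Set.indicator_apply]
      rw [this, integral_mul_const,
        integral_indicator_one (measurableSet_Ici : MeasurableSet (Set.Ici p.1)), measureReal_def, hGmap]
    calc ∫ p, ∫ c, F (c, p) ∂(μ.map C) ∂(μ.map X)
        = ∫ p, G p.1 * g p ∂(μ.map X) := by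
          exact integral_congr_ae (Filter.Eventually.of_forall h2)
      _ = ∫ ω, G (T ω) * g (X ω) ∂μ :=
          integral_map (φ := X) hXm.aemeasurable
            (f := fun p : ℝ × ℕ => G p.1 * g p)
            (((hGmeas.comp measurable_fst).mul hgmeas).aestronglyMeasurable)
  -- pointwise identity for the LHS integrand
  have hlhs : ∀ ω, w ω * h (T ω) (eps ω) * (if T ω ≤ t then (1:ℝ) else 0)
      = G t * ((if T ω ≤ C ω then (1:ℝ) else 0) * g (X ω)) := by
    intro ω
    by_cases h1 : T ω ≤ t
    · by_cases h2 : T ω ≤ C ω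
      · have hmin1 : min (T ω) t = T ω := min_eq_left h1
        have hmin2 : min (T ω) (C ω) = T ω := min_eq_left h2
        rw [hw ω, hmin1, hmin2, hmin1, if_pos h2]
        simp only [hgdef, hXdef, if_pos h1, mul_one]
        field_simp
      · have hmin1 : min (T ω) t = T ω := min_eq_left h1
        rw [hw ω, hmin1, if_neg h2]
        simp
    · simp only [if_neg h1, mul_zero, hgdef, hXdef]
      simp [h1]
  -- pointwise identity for the RHS integrand
  have hrhs : ∀ ω, G (T ω) * g (X ω)
      = h (T ω) (eps ω) * (if T ω ≤ t then (1:ℝ) else 0) := by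
    intro ω
    by_cases h1 : T ω ≤ t
    · have hGT : 0 < G (T ω) :=
        hGpos (T ω) ⟨le_of_lt (hTpos ω), le_trans h1 htτ⟩
      simp only [hgdef, hXdef, if_pos h1, mul_one]
      field_simp
    · simp [hgdef, hXdef, h1]
  calc ∫ ω, w ω * h (T ω) (eps ω) * (if T ω ≤ t then (1:ℝ) else 0) ∂μ
      = ∫ ω, G t * ((if T ω ≤ C ω then (1:ℝ) else 0) * g (X ω)) ∂μ :=
        integral_congr_ae (Filter.Eventually.of_forall hlhs)
    _ = G t * ∫ ω, (if T ω ≤ C ω then (1:ℝ) else 0) * g (X ω) ∂μ :=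
        integral_const_mul _ _
    _ = G t * ∫ ω, G (T ω) * g (X ω) ∂μ := by rw [key]
    _ = G t * ∫ ω, h (T ω) (eps ω) * (if T ω ≤ t then (1:ℝ) else 0) ∂μ := by
        rw [integral_congr_ae (Filter.Eventually.of_forall hrhs)]
end
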